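/- The distances from the vertices to the second Brocard point H− satisfy (dist A H−)² = b²c⁴/(a²b² + b²c² + c²a²), (dist B H−)² = c²a⁴/(a²b² + b²c² + c²a²), and (dist C H−)² = a²b⁴/(a²b² + b²c² + c²a²). -/

import Mathlib

open EuclideanGeometry

private lemma brocard_aux (A B C Hm : EuclideanSpace ℝ (Fin 2))
    (a b c : ℝ) (ha0 : 0 < a) (hb0 : 0 < b) (hc0 : 0 < c)
    (ha : a = dist B C) (hb : b = dist C A) (hc : c = dist A B)
    (hHm : Hm = (a^2*b^2 + b^2*c^2 + c^2*a^2)⁻¹ •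
      ((a^2*b^2) • A + (b^2*c^2) • B + (c^2*a^2) • C)) :
    (dist A Hm)^2 = b^2 * c^4 / (a^2*b^2 + b^2*c^2 + c^2*a^2) := by
  have hs : a^2*b^2 + b^2*c^2 + c^2*a^2 ≠ 0 := by positivity
  have key : A - Hm = (a^2*b^2 + b^2*c^2 + c^2*a^2)⁻¹ •
      ((b^2*c^2) • (A - B) + (c^2*a^2) • (A - C)) := by
    rw [hHm]; match_scalars <;> field_simp <;> ring
  have hAC : ‖A - C‖ = b := by rw [hb, dist_comm, dist_eq_norm]
  have hAB : ‖A - B‖ = c := by rw [hc, dist_eq_norm]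
  have hP : (inner ℝ (A - B) (A - C) : ℝ) = (c^2 + b^2 - a^2)/2 := by
    have h1 : ‖(A - C) - (A - B)‖ = a := by
      rw [ha, dist_eq_norm]; congr 1; abel
    have h4 := norm_sub_sq_real (A - C) (A - B)
    rw [h1, hAC, hAB] at h4
    rw [real_inner_comm]
    linarith
  have h0 : (dist A Hm)^2 = (inner ℝ (A - Hm) (A - Hm) : ℝ) := by
    rw [real_inner_self_eq_norm_sq, dist_eq_norm]
  have hP' : (inner ℝ (A - C) (A - B) : ℝ) = (c ^ 2 + b ^ 2 - a ^ 2) / 2 := by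
    rw [real_inner_comm]; exact hP
  rw [h0, key]
  simp only [inner_add_left, inner_add_right, real_inner_smul_left, real_inner_smul_right,
    hP, hP', real_inner_self_eq_norm_sq (A - B),
    real_inner_self_eq_norm_sq (A - C), hAB, hAC]
  field_simp
  ring

theorem second_brocard_vertex_distances
    (A B C Hm : EuclideanSpace ℝ (Fin 2))
    (hABC : AffineIndependent ℝ ![A, B, C])
    (a b c : ℝ) (ha : a = dist B C) (hb : b = dist C A) (hc : c = dist A B)
    (hHm : Hm = (a^2*b^2 + b^2*c^2 + c^2*a^2)⁻¹ •
      ((a^2*b^2) • A + (b^2*c^2) • B + (c^2*a^2) • C)) :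
    (dist A Hm)^2 = b^2 * c^4 / (a^2*b^2 + b^2*c^2 + c^2*a^2) ∧
    (dist B Hm)^2 = c^2 * a^4 / (a^2*b^2 + b^2*c^2 + c^2*a^2) ∧
    (dist C Hm)^2 = a^2 * b^4 / (a^2*b^2 + b^2*c^2 + c^2*a^2) := by
  have hinj := hABC.injective
  have hAB : A ≠ B := fun h => by
    have : ![A,B,C] 0 = ![A,B,C] 1 := by simpa using h
    exact (by decide : (0:Fin 3) ≠ 1) (hinj this)
  have hBC : B ≠ C := fun h => by
    have : ![A,B,C] 1 = ![A,B,C] 2 := by simpa using h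
    exact (by decide : (1:Fin 3) ≠ 2) (hinj this)
  have hCA : C ≠ A := fun h => by
    have : ![A,B,C] 2 = ![A,B,C] 0 := by simpa using h
    exact (by decide : (2:Fin 3) ≠ 0) (hinj this)
  have ha0 : 0 < a := ha ▸ dist_pos.2 hBC
  have hb0 : 0 < b := hb ▸ dist_pos.2 hCA
  have hc0 : 0 < c := hc ▸ dist_pos.2 hAB
  refine ⟨brocard_aux A B C Hm a b c ha0 hb0 hc0 ha hb hc hHm, ?_, ?_⟩
  · have h := brocard_aux B C A Hm b c a hb0 hc0 ha0 hb hc ha ?_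
    · rw [h]; ring_nf
    · rw [hHm]; match_scalars <;> field_simp <;> ring
  · have h := brocard_aux C A B Hm c a b hc0 ha0 hb0 hc ha hb ?_
    · rw [h]; ring_nf
    · rw [hHm]; match_scalars <;> field_simp <;> ring
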